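/- Let T > 0, p > 0, C⋆ > 0, γ > 0, δ > 0, and let 0 < η < p with η ≤ 2. Suppose that for every h ∈ (0,1] there are jointly measurable processes v₁ʰ, v₂ʰ on [0,T] with almost surely continuous paths, eʰ := v₁ʰ − v₂ʰ, and a random time τ_h : Ω → [0,T] such that {τ_h < T} ⊆ {sup_{t∈[0,T]}|v₁ʰ(t)| ≥ h^{−γ}} ∪ {sup_{t∈[0,T]}|v₂ʰ(t)| ≥ h^{−γ}}, E[sup_{t∈[0,T]}|vᵢʰ(t)|^p] ≤ C⋆ for i = 1,2, and E[sup_{t∈[0,τ_h]}|eʰ(t)|²] ≤ h^{2δ}. Then there is a constant C, depending only on p, η and C⋆, such that (E[sup_{t∈[0,T]}|eʰ(t)|^η])^{1/η} ≤ C·h^{min{γ(p−η)/η, δ}} for all h ∈ (0,1]. -/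

import Mathlib

open MeasureTheory Set

/-- a.s. continuity + joint measurability ⇒ the pathwise sup is AEMeasurable. -/
lemma aemeasurable_pathwise_sup {Ω : Type*} [MeasurableSpace Ω] (μ : Measure Ω)
    {T : ℝ} (hT : 0 < T) (v : ℝ → Ω → ℝ) (hv : Measurable (Function.uncurry v))
    (hc : ∀ᵐ ω ∂μ, ContinuousOn (fun t => v t ω) (Icc 0 T)) :
    AEMeasurable (fun ω => ⨆ t : Icc (0:ℝ) T, |v t.1 ω|) μ := by
  haveI : Nonempty (Icc (0:ℝ) T) := ⟨⟨0, le_refl 0, hT.le⟩⟩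
  set u := TopologicalSpace.denseSeq (Icc (0:ℝ) T) with hu
  have hdense : DenseRange u := TopologicalSpace.denseRange_denseSeq _
  refine ⟨fun ω => ⨆ n, |v (u n).1 ω|, Measurable.iSup fun n => ?_, ?_⟩
  · exact (hv.comp (measurable_const.prodMk measurable_id)).abs
  · filter_upwards [hc] with ω hω
    have hbdd : BddAbove (range fun t : Icc (0:ℝ) T => |v t.1 ω|) := by
      have := (isCompact_Icc.image_of_continuousOn hω.abs).bddAbove
      rwa [image_eq_range] at this
    have hbdd2 : BddAbove (range fun n => |v (u n).1 ω|) :=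
      hbdd.mono (range_comp_subset_range u (fun t : Icc (0:ℝ) T => |v t.1 ω|))
    refine le_antisymm (ciSup_le fun t => ?_) (ciSup_le fun n => le_ciSup hbdd (u n))
    obtain ⟨y, hy, hyt⟩ := mem_closure_iff_seq_limit.1 (hdense t)
    have hcont : Continuous fun s : Icc (0:ℝ) T => |v s.1 ω| :=
      continuous_abs.comp hω.restrict
    have htend : Filter.Tendsto (fun n => |v (y n).1 ω|) Filter.atTop (nhds (|v t.1 ω|)) :=
      (hcont.tendsto t).comp hyt
    refine le_of_tendsto htend (Filter.Eventually.of_forall fun n => ?_)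
    obtain ⟨m, hm⟩ := hy n
    rw [← hm]
    exact le_ciSup hbdd2 m

/-- Rate version of lemma `lem:rate`: with stopping level `h^(-γ)` and localized error bound
`h^(2δ)`, the uniform strong error in `L^η` is of order `h^(min{γ(p-η)/η, δ})`, with a constant
depending only on `p`, `η` and `C⋆`. -/
theorem enkf_rate_lemma_effective_rate
    {Ω : Type*} [MeasurableSpace Ω] (μ : Measure Ω) [IsProbabilityMeasure μ]
    (p η Cs : ℝ) (hp : 0 < p) (hCs : 0 < Cs) (hη0 : 0 < η) (hηp : η < p) (hη2 : η ≤ 2) :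
    ∃ C > 0, ∀ T γ δ : ℝ, 0 < T → 0 < γ → 0 < δ →
      ∀ h ∈ Ioc (0:ℝ) 1, ∀ (v₁ v₂ : ℝ → Ω → ℝ) (τ : Ω → ℝ),
      Measurable (Function.uncurry v₁) → Measurable (Function.uncurry v₂) →
      (∀ᵐ ω ∂μ, ContinuousOn (fun t => v₁ t ω) (Icc 0 T)) →
      (∀ᵐ ω ∂μ, ContinuousOn (fun t => v₂ t ω) (Icc 0 T)) →
      Measurable τ → (∀ ω, τ ω ∈ Icc (0:ℝ) T) →
      ({ω | τ ω < T} ⊆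
        {ω | h ^ (-γ) ≤ ⨆ t : Icc (0:ℝ) T, |v₁ t.1 ω|}
          ∪ {ω | h ^ (-γ) ≤ ⨆ t : Icc (0:ℝ) T, |v₂ t.1 ω|}) →
      (∫⁻ ω, ENNReal.ofReal ((⨆ t : Icc (0:ℝ) T, |v₁ t.1 ω|) ^ p) ∂μ ≤ ENNReal.ofReal Cs) →
      (∫⁻ ω, ENNReal.ofReal ((⨆ t : Icc (0:ℝ) T, |v₂ t.1 ω|) ^ p) ∂μ ≤ ENNReal.ofReal Cs) →
      (∫⁻ ω, ENNReal.ofReal ((⨆ t : Icc (0:ℝ) (τ ω), |v₁ t.1 ω - v₂ t.1 ω|) ^ 2) ∂μ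
          ≤ ENNReal.ofReal (h ^ (2 * δ))) →
      (∫⁻ ω, ENNReal.ofReal ((⨆ t : Icc (0:ℝ) T, |v₁ t.1 ω - v₂ t.1 ω|) ^ η) ∂μ) ^ (1/η)
        ≤ ENNReal.ofReal (C * h ^ min (γ * (p - η) / η) δ) := by
  have h2p1 : (0:ℝ) < 2 ^ (p + 1) := Real.rpow_pos_of_pos two_pos _
  refine ⟨(2 + 2 ^ (p + 1) * Cs) ^ (1 / η),
    Real.rpow_pos_of_pos (by nlinarith) _, ?_⟩
  intro T γ δ hT hγ hδ h hh v₁ v₂ τ hmv₁ hmv₂ hc1 hc2 hmτ hτmem hsub hI1 hI2 hIe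
  obtain ⟨hh0, hh1⟩ := hh
  set m := min (γ * (p - η) / η) δ with hmdef
  have hK : (0:ℝ) < h ^ (-γ) := Real.rpow_pos_of_pos hh0 _
  have hKpow : h ^ (γ * (p - η)) = (h ^ (-γ)) ^ (η - p) := by
    rw [show γ * (p - η) = (-γ) * (η - p) by ring, Real.rpow_mul hh0.le]
  have h2ppos : (0:ℝ) < 2 ^ p := Real.rpow_pos_of_pos two_pos _
  have hcK : (0:ℝ) ≤ h ^ (γ * (p - η)) * 2 ^ p :=
    mul_nonneg (Real.rpow_pos_of_pos hh0 _).le h2ppos.le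
  -- measurability of the moment integrands
  have hS1meas := aemeasurable_pathwise_sup μ hT v₁ hmv₁ hc1
  have hS2meas := aemeasurable_pathwise_sup μ hT v₂ hmv₂ hc2
  have hg1 : AEMeasurable (fun ω => ENNReal.ofReal ((⨆ t : Icc (0:ℝ) T, |v₁ t.1 ω|) ^ p)) μ :=
    ENNReal.measurable_ofReal.comp_aemeasurable
      ((Real.continuous_rpow_const hp.le).measurable.comp_aemeasurable hS1meas)
  have hg2 : AEMeasurable (fun ω => ENNReal.ofReal ((⨆ t : Icc (0:ℝ) T, |v₂ t.1 ω|) ^ p)) μ :=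
    ENNReal.measurable_ofReal.comp_aemeasurable
      ((Real.continuous_rpow_const hp.le).measurable.comp_aemeasurable hS2meas)
  -- pointwise a.e. bound
  have key : ∀ᵐ ω ∂μ,
      ENNReal.ofReal ((⨆ t : Icc (0:ℝ) T, |v₁ t.1 ω - v₂ t.1 ω|) ^ η)
        ≤ (ENNReal.ofReal (h ^ (δ * η))
            + ENNReal.ofReal (h ^ (γ * (p - η)) * 2 ^ p) *
              (ENNReal.ofReal ((⨆ t : Icc (0:ℝ) T, |v₁ t.1 ω|) ^ p)
                + ENNReal.ofReal ((⨆ t : Icc (0:ℝ) T, |v₂ t.1 ω|) ^ p)))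
          + ENNReal.ofReal (h ^ (δ * (η - 2))) *
              ENNReal.ofReal ((⨆ t : Icc (0:ℝ) (τ ω), |v₁ t.1 ω - v₂ t.1 ω|) ^ 2) := by
    filter_upwards [hc1, hc2] with ω hω1 hω2
    set E := ⨆ t : Icc (0:ℝ) T, |v₁ t.1 ω - v₂ t.1 ω| with hEdef
    set S1 := ⨆ t : Icc (0:ℝ) T, |v₁ t.1 ω| with hS1def
    set S2 := ⨆ t : Icc (0:ℝ) T, |v₂ t.1 ω| with hS2def
    set Eτ := ⨆ t : Icc (0:ℝ) (τ ω), |v₁ t.1 ω - v₂ t.1 ω| with hEτdef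
    have hE0 : 0 ≤ E := Real.iSup_nonneg fun t => abs_nonneg _
    have hS10 : 0 ≤ S1 := Real.iSup_nonneg fun t => abs_nonneg _
    have hS20 : 0 ≤ S2 := Real.iSup_nonneg fun t => abs_nonneg _
    have hsum0 : 0 ≤ S1 ^ p + S2 ^ p :=
      add_nonneg (Real.rpow_nonneg hS10 _) (Real.rpow_nonneg hS20 _)
    have hreal : E ^ η ≤ h ^ (δ * η) + h ^ (γ * (p - η)) * 2 ^ p * (S1 ^ p + S2 ^ p)
        + h ^ (δ * (η - 2)) * Eτ ^ 2 := by
      by_cases hτ : τ ω < T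
      · -- stopped early: moment term dominates
        have hor : h ^ (-γ) ≤ S1 ∨ h ^ (-γ) ≤ S2 := hsub hτ
        have hEτsq : (0:ℝ) ≤ h ^ (δ * (η - 2)) * Eτ ^ 2 :=
          mul_nonneg (Real.rpow_pos_of_pos hh0 _).le (sq_nonneg _)
        have ha0 : (0:ℝ) ≤ h ^ (δ * η) := (Real.rpow_pos_of_pos hh0 _).le
        have hs : E ^ η ≤ h ^ (γ * (p - η)) * 2 ^ p * (S1 ^ p + S2 ^ p) := by
          have h2p1' : (1:ℝ) ≤ 2 ^ p := Real.one_le_rpow one_le_two hp.le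
          rcases le_or_gt E (h ^ (-γ)) with hEK | hKE
          · have hKp : (h ^ (-γ)) ^ p ≤ S1 ^ p + S2 ^ p := by
              rcases hor with h1 | h1
              · exact (Real.rpow_le_rpow hK.le h1 hp.le).trans
                  (le_add_of_nonneg_right (Real.rpow_nonneg hS20 _))
              · exact (Real.rpow_le_rpow hK.le h1 hp.le).trans
                  (le_add_of_nonneg_left (Real.rpow_nonneg hS10 _))
            calc E ^ η ≤ (h ^ (-γ)) ^ η := Real.rpow_le_rpow hE0 hEK hη0.le
              _ = (h ^ (-γ)) ^ (η - p) * (h ^ (-γ)) ^ p := by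
                  rw [← Real.rpow_add hK]; ring_nf
              _ ≤ (h ^ (-γ)) ^ (η - p) * (S1 ^ p + S2 ^ p) :=
                  mul_le_mul_of_nonneg_left hKp (Real.rpow_nonneg hK.le _)
              _ = (h ^ (-γ)) ^ (η - p) * 1 * (S1 ^ p + S2 ^ p) := by ring
              _ ≤ (h ^ (-γ)) ^ (η - p) * 2 ^ p * (S1 ^ p + S2 ^ p) :=
                  mul_le_mul_of_nonneg_right
                    (mul_le_mul_of_nonneg_left h2p1' (Real.rpow_nonneg hK.le _)) hsum0
              _ = h ^ (γ * (p - η)) * 2 ^ p * (S1 ^ p + S2 ^ p) := by rw [hKpow]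
          · haveI : Nonempty (Icc (0:ℝ) T) := ⟨⟨0, le_refl 0, hT.le⟩⟩
            have hb1 : BddAbove (range fun t : Icc (0:ℝ) T => |v₁ t.1 ω|) := by
              have := (isCompact_Icc.image_of_continuousOn hω1.abs).bddAbove
              rwa [image_eq_range] at this
            have hb2 : BddAbove (range fun t : Icc (0:ℝ) T => |v₂ t.1 ω|) := by
              have := (isCompact_Icc.image_of_continuousOn hω2.abs).bddAbove
              rwa [image_eq_range] at this
            have hE_le : E ≤ S1 + S2 := by
              refine ciSup_le fun t => ?_
              have habs : |v₁ t.1 ω - v₂ t.1 ω| ≤ |v₁ t.1 ω| + |v₂ t.1 ω| := by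
                rw [sub_eq_add_neg]
                exact (abs_add_le _ _).trans (by rw [abs_neg])
              exact habs.trans (add_le_add (le_ciSup hb1 t) (le_ciSup hb2 t))
            have hmax : E ≤ 2 * max S1 S2 := by
              rcases max_cases S1 S2 with ⟨heq, hle⟩ | ⟨heq, hle⟩ <;> rw [heq] <;> linarith
            have hmaxp : (max S1 S2) ^ p ≤ S1 ^ p + S2 ^ p := by
              rcases max_cases S1 S2 with ⟨heq, hle⟩ | ⟨heq, hle⟩ <;> rw [heq]
              · exact le_add_of_nonneg_right (Real.rpow_nonneg hS20 _)
              · exact le_add_of_nonneg_left (Real.rpow_nonneg hS10 _)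
            have hEp : E ^ p ≤ 2 ^ p * (S1 ^ p + S2 ^ p) := by
              calc E ^ p ≤ (2 * max S1 S2) ^ p := Real.rpow_le_rpow hE0 hmax hp.le
                _ = 2 ^ p * (max S1 S2) ^ p :=
                    Real.mul_rpow (by norm_num) (le_max_of_le_left hS10)
                _ ≤ 2 ^ p * (S1 ^ p + S2 ^ p) :=
                    mul_le_mul_of_nonneg_left hmaxp h2ppos.le
            calc E ^ η = E ^ (η - p) * E ^ p := by rw [← Real.rpow_add (hK.trans hKE)]; ring_nf
              _ ≤ (h ^ (-γ)) ^ (η - p) * E ^ p :=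
                  mul_le_mul_of_nonneg_right
                    (Real.rpow_le_rpow_of_nonpos hK hKE.le (by linarith))
                    (Real.rpow_nonneg hE0 _)
              _ ≤ (h ^ (-γ)) ^ (η - p) * (2 ^ p * (S1 ^ p + S2 ^ p)) :=
                  mul_le_mul_of_nonneg_left hEp (Real.rpow_nonneg hK.le _)
              _ = h ^ (γ * (p - η)) * 2 ^ p * (S1 ^ p + S2 ^ p) := by rw [hKpow]; ring
        linarith
      · -- no stopping: localized error dominates
        have hτT : τ ω = T := le_antisymm (hτmem ω).2 (not_lt.1 hτ)
        have hEτE : Eτ = E := by rw [hEτdef, hEdef, hτT]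
        have hmid : (0:ℝ) ≤ h ^ (γ * (p - η)) * 2 ^ p * (S1 ^ p + S2 ^ p) :=
          mul_nonneg hcK hsum0
        have ha : (0:ℝ) < h ^ δ := Real.rpow_pos_of_pos hh0 _
        have hs : E ^ η ≤ h ^ (δ * η) + h ^ (δ * (η - 2)) * E ^ 2 := by
          rcases le_or_gt E (h ^ δ) with hEa | haE
          · have h1 : E ^ η ≤ (h ^ δ) ^ η := Real.rpow_le_rpow hE0 hEa hη0.le
            have heq : (h ^ δ) ^ η = h ^ (δ * η) := (Real.rpow_mul hh0.le δ η).symm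
            have h2 : (0:ℝ) ≤ h ^ (δ * (η - 2)) * E ^ 2 :=
              mul_nonneg (Real.rpow_pos_of_pos hh0 _).le (sq_nonneg _)
            linarith
          · have h1 : E ^ η = E ^ (η - 2) * E ^ 2 := by
              rw [← Real.rpow_natCast E 2, ← Real.rpow_add (ha.trans haE)]
              norm_num
            have h2 : E ^ (η - 2) ≤ (h ^ δ) ^ (η - 2) :=
              Real.rpow_le_rpow_of_nonpos ha haE.le (by linarith)
            have h3 : (h ^ δ) ^ (η - 2) = h ^ (δ * (η - 2)) := (Real.rpow_mul hh0.le _ _).symm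
            have h4 : E ^ (η - 2) * E ^ 2 ≤ h ^ (δ * (η - 2)) * E ^ 2 := by
              rw [← h3]; exact mul_le_mul_of_nonneg_right h2 (sq_nonneg E)
            have h5 : (0:ℝ) ≤ h ^ (δ * η) := (Real.rpow_pos_of_pos hh0 _).le
            linarith
        rw [hEτE]
        linarith
    calc ENNReal.ofReal (E ^ η)
        ≤ ENNReal.ofReal (h ^ (δ * η) + h ^ (γ * (p - η)) * 2 ^ p * (S1 ^ p + S2 ^ p)
            + h ^ (δ * (η - 2)) * Eτ ^ 2) := ENNReal.ofReal_le_ofReal hreal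
      _ = _ := by
          have hd0 : (0:ℝ) ≤ h ^ (δ * (η - 2)) := (Real.rpow_pos_of_pos hh0 _).le
          have ha0 : (0:ℝ) ≤ h ^ (δ * η) := (Real.rpow_pos_of_pos hh0 _).le
          rw [ENNReal.ofReal_add (add_nonneg ha0 (mul_nonneg hcK hsum0))
              (mul_nonneg hd0 (sq_nonneg _)),
            ENNReal.ofReal_add ha0 (mul_nonneg hcK hsum0), ENNReal.ofReal_mul hcK,
            ENNReal.ofReal_mul hd0,
            ENNReal.ofReal_add (Real.rpow_nonneg hS10 _) (Real.rpow_nonneg hS20 _)]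
  -- integrate the pointwise bound
  have hstep : (∫⁻ ω, ENNReal.ofReal ((⨆ t : Icc (0:ℝ) T, |v₁ t.1 ω - v₂ t.1 ω|) ^ η) ∂μ)
      ≤ ENNReal.ofReal ((2 + 2 ^ (p + 1) * Cs) * h ^ (m * η)) := by
    have hfmeas : AEMeasurable (fun ω => ENNReal.ofReal (h ^ (δ * η))
        + ENNReal.ofReal (h ^ (γ * (p - η)) * 2 ^ p) *
          (ENNReal.ofReal ((⨆ t : Icc (0:ℝ) T, |v₁ t.1 ω|) ^ p)
            + ENNReal.ofReal ((⨆ t : Icc (0:ℝ) T, |v₂ t.1 ω|) ^ p))) μ :=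
      aemeasurable_const.add (aemeasurable_const.mul (hg1.add hg2))
    calc (∫⁻ ω, ENNReal.ofReal ((⨆ t : Icc (0:ℝ) T, |v₁ t.1 ω - v₂ t.1 ω|) ^ η) ∂μ)
        ≤ ∫⁻ ω, ((ENNReal.ofReal (h ^ (δ * η))
            + ENNReal.ofReal (h ^ (γ * (p - η)) * 2 ^ p) *
              (ENNReal.ofReal ((⨆ t : Icc (0:ℝ) T, |v₁ t.1 ω|) ^ p)
                + ENNReal.ofReal ((⨆ t : Icc (0:ℝ) T, |v₂ t.1 ω|) ^ p)))
          + ENNReal.ofReal (h ^ (δ * (η - 2))) *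
              ENNReal.ofReal ((⨆ t : Icc (0:ℝ) (τ ω), |v₁ t.1 ω - v₂ t.1 ω|) ^ 2)) ∂μ :=
          lintegral_mono_ae key
      _ = (∫⁻ ω, (ENNReal.ofReal (h ^ (δ * η))
            + ENNReal.ofReal (h ^ (γ * (p - η)) * 2 ^ p) *
              (ENNReal.ofReal ((⨆ t : Icc (0:ℝ) T, |v₁ t.1 ω|) ^ p)
                + ENNReal.ofReal ((⨆ t : Icc (0:ℝ) T, |v₂ t.1 ω|) ^ p))) ∂μ)
          + ∫⁻ ω, ENNReal.ofReal (h ^ (δ * (η - 2))) *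
              ENNReal.ofReal ((⨆ t : Icc (0:ℝ) (τ ω), |v₁ t.1 ω - v₂ t.1 ω|) ^ 2) ∂μ :=
          lintegral_add_left' hfmeas _
      _ = (ENNReal.ofReal (h ^ (δ * η))
            + ENNReal.ofReal (h ^ (γ * (p - η)) * 2 ^ p) *
              ((∫⁻ ω, ENNReal.ofReal ((⨆ t : Icc (0:ℝ) T, |v₁ t.1 ω|) ^ p) ∂μ)
                + ∫⁻ ω, ENNReal.ofReal ((⨆ t : Icc (0:ℝ) T, |v₂ t.1 ω|) ^ p) ∂μ))
          + ENNReal.ofReal (h ^ (δ * (η - 2))) *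
              ∫⁻ ω, ENNReal.ofReal ((⨆ t : Icc (0:ℝ) (τ ω), |v₁ t.1 ω - v₂ t.1 ω|) ^ 2) ∂μ := by
          rw [lintegral_const_mul' _ _ ENNReal.ofReal_ne_top,
            lintegral_add_left' aemeasurable_const, lintegral_const, measure_univ, mul_one,
            lintegral_const_mul'' _ (show AEMeasurable (fun ω => ENNReal.ofReal ((⨆ t : Icc (0:ℝ) T, |v₁ t.1 ω|) ^ p)
                + ENNReal.ofReal ((⨆ t : Icc (0:ℝ) T, |v₂ t.1 ω|) ^ p)) μ from hg1.add hg2),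
              lintegral_add_left' hg1]
      _ ≤ (ENNReal.ofReal (h ^ (δ * η))
            + ENNReal.ofReal (h ^ (γ * (p - η)) * 2 ^ p) * (ENNReal.ofReal Cs + ENNReal.ofReal Cs))
          + ENNReal.ofReal (h ^ (δ * (η - 2))) * ENNReal.ofReal (h ^ (2 * δ)) := by
          gcongr
      _ = ENNReal.ofReal (h ^ (δ * η) + h ^ (γ * (p - η)) * 2 ^ p * (Cs + Cs)
          + h ^ (δ * (η - 2)) * h ^ (2 * δ)) := by
          have hd0 : (0:ℝ) ≤ h ^ (δ * (η - 2)) := (Real.rpow_pos_of_pos hh0 _).le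
          have ha0 : (0:ℝ) ≤ h ^ (δ * η) := (Real.rpow_pos_of_pos hh0 _).le
          have hG0 : (0:ℝ) ≤ h ^ (2 * δ) := (Real.rpow_pos_of_pos hh0 _).le
          have hCs2 : (0:ℝ) ≤ Cs + Cs := by linarith
          rw [ENNReal.ofReal_add (add_nonneg ha0 (mul_nonneg hcK hCs2)) (mul_nonneg hd0 hG0),
            ENNReal.ofReal_add ha0 (mul_nonneg hcK hCs2), ENNReal.ofReal_mul hcK,
            ENNReal.ofReal_mul hd0, ENNReal.ofReal_add hCs.le hCs.le]
      _ ≤ ENNReal.ofReal ((2 + 2 ^ (p + 1) * Cs) * h ^ (m * η)) := by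
          apply ENNReal.ofReal_le_ofReal
          have e1 : h ^ (δ * η) ≤ h ^ (m * η) :=
            Real.rpow_le_rpow_of_exponent_ge hh0 hh1
              (mul_le_mul_of_nonneg_right (min_le_right _ _) hη0.le)
          have e2' : m * η ≤ γ * (p - η) := by
            calc m * η ≤ γ * (p - η) / η * η :=
                  mul_le_mul_of_nonneg_right (min_le_left _ _) hη0.le
              _ = γ * (p - η) := div_mul_cancel₀ _ hη0.ne'
          have e2 : h ^ (γ * (p - η)) ≤ h ^ (m * η) :=
            Real.rpow_le_rpow_of_exponent_ge hh0 hh1 e2'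
          have e3 : h ^ (δ * (η - 2)) * h ^ (2 * δ) = h ^ (δ * η) := by
            rw [← Real.rpow_add hh0]; congr 1; ring
          have e4 : h ^ (γ * (p - η)) * 2 ^ p * (Cs + Cs) = 2 ^ (p + 1) * Cs * h ^ (γ * (p - η)) := by
            rw [Real.rpow_add two_pos, Real.rpow_one]; ring
          have e5 : 2 ^ (p + 1) * Cs * h ^ (γ * (p - η)) ≤ 2 ^ (p + 1) * Cs * h ^ (m * η) :=
            mul_le_mul_of_nonneg_left e2 (mul_nonneg h2p1.le hCs.le)
          rw [e3, e4]
          nlinarith [e1, e5]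
  -- conclude by taking the 1/η-th power
  have hBpos : (0:ℝ) < 2 + 2 ^ (p + 1) * Cs := by nlinarith
  have hmul_pos : (0:ℝ) < (2 + 2 ^ (p + 1) * Cs) * h ^ (m * η) :=
    mul_pos hBpos (Real.rpow_pos_of_pos hh0 _)
  calc (∫⁻ ω, ENNReal.ofReal ((⨆ t : Icc (0:ℝ) T, |v₁ t.1 ω - v₂ t.1 ω|) ^ η) ∂μ) ^ (1/η)
      ≤ (ENNReal.ofReal ((2 + 2 ^ (p + 1) * Cs) * h ^ (m * η))) ^ (1/η) :=
        ENNReal.rpow_le_rpow hstep (by positivity)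
    _ = ENNReal.ofReal (((2 + 2 ^ (p + 1) * Cs) * h ^ (m * η)) ^ (1/η)) :=
        ENNReal.ofReal_rpow_of_pos hmul_pos
    _ = ENNReal.ofReal ((2 + 2 ^ (p + 1) * Cs) ^ (1/η) * h ^ m) := by
        congr 1
        rw [Real.mul_rpow hBpos.le (Real.rpow_nonneg hh0.le _), ← Real.rpow_mul hh0.le]
        congr 1
        field_simp
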